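/- arXiv:2203.13468 — 2 statements merged into one kernel-verified Lean document; each statement's English description precedes it below -/
import Mathlib

section
/- With the same setup and assuming: for all m = (m₊,m₋) ∈ ℕ₀^{2N} with |m| ≤ 2M and 𝛌·m = 0 one has m₊ = m₋. Define Λⱼ = { m ∈ NR : 𝛌·m = λⱼ }. Then for every m ∈ Λⱼ there exists n ∈ Λ₀ := { m ∈ NR : 𝛌·m = 0 } with m = eʲ + n, where eʲ is the multi-index with a single 1 in the (+,j) slot. -/
open Finset

/-- Multi-indices `m = (m₊, m₋) ∈ ℕ₀^{2N}`. -/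
abbrev MultiIdx (N : ℕ) := (Fin N → ℕ) × (Fin N → ℕ)

/-- `𝛌·m = Σⱼ λⱼ (m₊ⱼ - m₋ⱼ)`. -/
def lamDot {N : ℕ} (lam : Fin N → ℝ) (m : MultiIdx N) : ℝ :=
  ∑ j, lam j * ((m.1 j : ℝ) - (m.2 j : ℝ))

/-- `|m| = Σⱼ (m₊ⱼ + m₋ⱼ)`. -/
def miSize {N : ℕ} (m : MultiIdx N) : ℕ := ∑ j, (m.1 j + m.2 j)

/-- The partial order `n ≺ m`. -/
def miPrec {N : ℕ} (n m : MultiIdx N) : Prop :=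
  (∀ j, n.1 j + n.2 j ≤ m.1 j + m.2 j) ∧ miSize n < miSize m

/-- `R = { m : |𝛌·m| > ω }`. -/
def Rset {N : ℕ} (lam : Fin N → ℝ) (ω : ℝ) : Set (MultiIdx N) :=
  {m | ω < |lamDot lam m|}

/-- `R_min`: the `≺`-minimal elements of `R`. -/
def Rmin {N : ℕ} (lam : Fin N → ℝ) (ω : ℝ) : Set (MultiIdx N) :=
  {m | m ∈ Rset lam ω ∧ ¬ ∃ n ∈ Rset lam ω, miPrec n m}

/-- `I = { m : ∃ n ∈ R_min, n ≺ m }`. -/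
def Iset {N : ℕ} (lam : Fin N → ℝ) (ω : ℝ) : Set (MultiIdx N) :=
  {m | ∃ n ∈ Rmin lam ω, miPrec n m}

/-- `NR = ℕ₀^{2N} \ (I ∪ R_min)`. -/
def NRset {N : ℕ} (lam : Fin N → ℝ) (ω : ℝ) : Set (MultiIdx N) :=
  (Iset lam ω ∪ Rmin lam ω)ᶜ

lemma miPrec_trans {N : ℕ} {a b c : MultiIdx N} (h1 : miPrec a b) (h2 : miPrec b c) :
    miPrec a c :=
  ⟨fun j => (h1.1 j).trans (h2.1 j), h1.2.trans h2.2⟩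

lemma exists_rmin_le {N : ℕ} (lam : Fin N → ℝ) (ω : ℝ) :
    ∀ k, ∀ n ∈ Rset lam ω, miSize n ≤ k →
      ∃ n' ∈ Rmin lam ω, n' = n ∨ miPrec n' n := by
  intro k
  induction k with
  | zero =>
    intro n hn hs
    by_cases hmin : n ∈ Rmin lam ω
    · exact ⟨n, hmin, Or.inl rfl⟩
    · exfalso
      simp only [Rmin, Set.mem_setOf_eq, not_and, not_not] at hmin
      obtain ⟨n₂, _, hprec⟩ := hmin hn
      have := hprec.2
      omega
  | succ k ih =>
    intro n hn hs
    by_cases hmin : n ∈ Rmin lam ω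
    · exact ⟨n, hmin, Or.inl rfl⟩
    · simp only [Rmin, Set.mem_setOf_eq, not_and, not_not] at hmin
      obtain ⟨n₂, hn₂, hprec⟩ := hmin hn
      have hlt := hprec.2
      obtain ⟨n', hn', h⟩ := ih n₂ hn₂ (by omega)
      refine ⟨n', hn', Or.inr ?_⟩
      rcases h with rfl | h
      · exact hprec
      · exact miPrec_trans h hprec

lemma exists_le_sum_eq {N : ℕ} (g : Fin N → ℕ) :
    ∀ k, k ≤ ∑ j, g j → ∃ f : Fin N → ℕ, (∀ j, f j ≤ g j) ∧ ∑ j, f j = k := by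
  intro k
  induction k with
  | zero => exact fun _ => ⟨0, fun j => Nat.zero_le _, by simp⟩
  | succ k ih =>
    intro hk
    obtain ⟨f, hf, hsum⟩ := ih (by omega)
    have : ∃ j, f j < g j := by
      by_contra h
      push_neg at h
      have : ∑ j, g j ≤ ∑ j, f j := Finset.sum_le_sum fun j _ => h j
      omega
    obtain ⟨j, hj⟩ := this
    refine ⟨f + Pi.single j 1, fun i => ?_, ?_⟩
    · by_cases hij : i = j
      · subst hij; simpa using hj
      · simp [Pi.single_apply, hij, hf i]
    · simp [Finset.sum_add_distrib, hsum, Pi.single_apply]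

lemma nr_size {N : ℕ} (hN : 0 < N) (lam : Fin N → ℝ) (ω : ℝ) (hω : 0 < ω)
    (hpos : ∀ j, 0 < lam j) (hmono : StrictMono lam)
    (M : ℕ) (hM2 : ω ≤ (M : ℝ) * lam ⟨0, hN⟩)
    (m : MultiIdx N) (hm : m ∈ NRset lam ω) : miSize m ≤ M + 1 := by
  by_contra h
  push_neg at h
  obtain ⟨f, hf, hsum⟩ := exists_le_sum_eq (fun j => m.1 j + m.2 j) (M + 1)
    (by rw [show ∑ j, (m.1 j + m.2 j) = miSize m from rfl]; omega)
  set n : MultiIdx N := (f, 0) with hn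
  have hlam0 : ∀ i, lam ⟨0, hN⟩ ≤ lam i := fun i =>
    hmono.monotone (by simp [Fin.le_def])
  have hld : lamDot lam n = ∑ i, lam i * (f i : ℝ) := by
    simp [lamDot, hn]
  have hge : (M + 1 : ℝ) * lam ⟨0, hN⟩ ≤ lamDot lam n := by
    rw [hld]
    calc (M + 1 : ℝ) * lam ⟨0, hN⟩ = ∑ i, lam ⟨0, hN⟩ * (f i : ℝ) := by
          rw [← Finset.mul_sum, mul_comm]
          congr 1
          exact_mod_cast hsum.symm
      _ ≤ ∑ i, lam i * (f i : ℝ) :=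
          Finset.sum_le_sum fun i _ => by
            have := hlam0 i
            have : (0:ℝ) ≤ (f i : ℝ) := by positivity
            nlinarith [hlam0 i, (hpos ⟨0, hN⟩)]
  have hnR : n ∈ Rset lam ω := by
    have h1 : ω < lamDot lam n := by
      have : (M : ℝ) * lam ⟨0, hN⟩ < (M + 1 : ℝ) * lam ⟨0, hN⟩ := by
        nlinarith [hpos ⟨0, hN⟩]
      linarith
    show ω < |lamDot lam n|
    rw [abs_of_pos (by linarith)]
    exact h1
  have hprec : miPrec n m := by
    constructor
    · intro j; simpa [hn] using hf j
    · show miSize n < miSize m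
      have : miSize n = M + 1 := by simp [miSize, hn, hsum]
      omega
  obtain ⟨n', hn', hcase⟩ := exists_rmin_le lam ω (miSize n) n hnR le_rfl
  apply hm
  left
  refine ⟨n', hn', ?_⟩
  rcases hcase with rfl | hc
  · exact hprec
  · exact miPrec_trans hc hprec

/-- Lemma (combinatorics, part 4): under the assumption that `|m| ≤ 2M` and
`𝛌·m = 0` force `m₊ = m₋`, every `m ∈ Λⱼ = {m ∈ NR : 𝛌·m = λⱼ}` is of the form
`m = eʲ + n` with `n ∈ Λ₀ = {m ∈ NR : 𝛌·m = 0}`. -/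
theorem Lambda_j_decomposition (N : ℕ) (hN : 0 < N) (lam : Fin N → ℝ)
    (ω : ℝ) (hω : 0 < ω)
    (hpos : ∀ j, 0 < lam j) (hmono : StrictMono lam)
    (hmax : lam ⟨N - 1, Nat.sub_lt hN one_pos⟩ < ω)
    (M : ℕ) (hM1 : ((M : ℝ) - 1) * lam ⟨0, hN⟩ < ω) (hM2 : ω ≤ (M : ℝ) * lam ⟨0, hN⟩)
    (hres : ∀ m : MultiIdx N, miSize m ≤ 2 * M → lamDot lam m = 0 → m.1 = m.2) :
    ∀ j : Fin N, ∀ m ∈ {m ∈ NRset lam ω | lamDot lam m = lam j},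
      ∃ n ∈ {m ∈ NRset lam ω | lamDot lam m = 0},
        m = ((Pi.single j 1, (0 : Fin N → ℕ)) : MultiIdx N) + n := by
  intro j m hm
  obtain ⟨hmNR, hmlam⟩ := hm
  -- M ≥ 2
  have hlam0max : lam ⟨0, hN⟩ ≤ lam ⟨N - 1, Nat.sub_lt hN one_pos⟩ :=
    hmono.monotone (by simp [Fin.le_def])
  have hM : 2 ≤ M := by
    by_contra h
    push_neg at h
    interval_cases M
    · simp at hM2; nlinarith [hpos ⟨0, hN⟩]
    · simp at hM2; linarith
  -- size bound
  have hsize : miSize m ≤ M + 1 := nr_size hN lam ω hω hpos hmono M hM2 m hmNR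
  -- the combined index m + ē^j
  set m' : MultiIdx N := (m.1, m.2 + Pi.single j 1) with hm'
  have hsize' : miSize m' = miSize m + 1 := by
    simp [miSize, hm', Finset.sum_add_distrib, Pi.single_apply]
    omega
  have hsingle : ∑ i, lam i * (((Pi.single j 1 : Fin N → ℕ) i : ℕ) : ℝ) = lam j := by
    simp [Pi.single_apply]
  have hld' : lamDot lam m' = 0 := by
    have : lamDot lam m' = lamDot lam m - ∑ i, lam i * (((Pi.single j 1 : Fin N → ℕ) i : ℕ) : ℝ) := by
      simp only [lamDot, hm', Pi.add_apply, ← Finset.sum_sub_distrib]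
      congr 1
      ext i
      push_cast
      ring
    rw [this, hsingle, hmlam, sub_self]
  have heq : m.1 = m.2 + Pi.single j 1 := by
    have := hres m' (by omega) hld'
    simpa [hm'] using this
  -- the candidate n
  refine ⟨(m.2, m.2), ⟨?_, by simp [lamDot]⟩, ?_⟩
  · -- (m.2, m.2) ∈ NRset
    have hld0 : lamDot lam ((m.2, m.2) : MultiIdx N) = 0 := by simp [lamDot]
    have hprec : miPrec ((m.2, m.2) : MultiIdx N) m := by
      constructor
      · intro i
        have : m.2 i ≤ m.1 i := by
          rw [heq]; simp [Pi.single_apply]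
        show m.2 i + m.2 i ≤ m.1 i + m.2 i
        omega
      · have h1 : miSize m = miSize ((m.2, m.2) : MultiIdx N) + 1 := by
          simp only [miSize]
          have hc : ∀ i ∈ Finset.univ, m.1 i + m.2 i
              = (m.2 i + m.2 i) + (if i = j then 1 else 0) := fun i _ => by
            rw [heq]; simp only [Pi.add_apply, Pi.single_apply]; split <;> omega
          rw [Finset.sum_congr rfl hc, Finset.sum_add_distrib,
            Finset.sum_ite_eq' Finset.univ j (fun _ => 1)]
          simp
        omega
    intro hbad
    rcases hbad with hI | hRmin
    · obtain ⟨n', hn', hprec'⟩ := hI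
      exact hmNR (Or.inl ⟨n', hn', miPrec_trans hprec' hprec⟩)
    · have h2 : ω < |lamDot lam ((m.2, m.2) : MultiIdx N)| := hRmin.1
      rw [hld0] at h2
      simp at h2
      linarith
  · -- m = e^j + (m.2, m.2)
    refine Prod.ext ?_ ?_
    · show m.1 = Pi.single j 1 + m.2
      rw [heq, add_comm]
    · show m.2 = 0 + m.2
      rw [zero_add]
end

section
/- Let U ≥ 0 be a nonzero potential in L¹(ℝ,ℝ). Then there exists a constant C_U > 0 such that for every measurable W ≥ 0 with ⟨x⟩W ∈ L¹(ℝ) and every f ∈ H¹(ℝ), one has ∫ W |f|² dx ≤ C_U ‖⟨x⟩W‖_{L¹} ( ∫ |f'|² dx + ∫ U |f|² dx ). -/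
open Real MeasureTheory Set Filter
open scoped Interval

lemma aux_one_le (x : ℝ) : 1 ≤ Real.sqrt (1 + x ^ 2) := by
  nlinarith [Real.sq_sqrt (by positivity : (0:ℝ) ≤ 1 + x ^ 2),
    Real.sqrt_nonneg (1 + x ^ 2)]

lemma aux_abs_le (x : ℝ) : |x| ≤ Real.sqrt (1 + x ^ 2) := by
  nlinarith [Real.sq_sqrt (by positivity : (0:ℝ) ≤ 1 + x ^ 2),
    Real.sqrt_nonneg (1 + x ^ 2), abs_nonneg x, sq_abs x]

lemma aux_cs {T : Set ℝ} (hTfin : volume T ≠ ⊤)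
    {g : ℝ → ℝ} (hg : MemLp g 2 volume) :
    ∫ t in T, |g t| ≤ Real.sqrt (∫ t in T, g t ^ 2) * Real.sqrt ((volume T).toReal) := by
  haveI : IsFiniteMeasure (volume.restrict T) :=
    ⟨by rwa [Measure.restrict_apply_univ, lt_top_iff_ne_top]⟩
  have hconj : Real.HolderConjugate 2 2 := by
    constructor <;> norm_num
  have hgm : MemLp (fun t => |g t|) (ENNReal.ofReal 2) (volume.restrict T) := by
    simpa [Real.norm_eq_abs, ENNReal.ofReal_ofNat] using (hg.restrict T).norm
  have h1 : MemLp (fun _ : ℝ => (1:ℝ)) (ENNReal.ofReal 2) (volume.restrict T) := by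
    simpa using memLp_const (μ := volume.restrict T) (1:ℝ)
  have := integral_mul_le_Lp_mul_Lq_of_nonneg (μ := volume.restrict T) hconj
    (Filter.Eventually.of_forall fun x => abs_nonneg (g x))
    (Filter.Eventually.of_forall fun _ => zero_le_one) hgm h1
  simp only [mul_one, Real.one_rpow] at this
  have heq1 : ∫ t in T, |g t| ^ (2:ℝ) = ∫ t in T, g t ^ 2 := by
    refine integral_congr_ae (Filter.Eventually.of_forall fun x => ?_)
    show |g x| ^ (2:ℝ) = g x ^ 2
    rw [show ((2:ℝ)) = ((2:ℕ):ℝ) by norm_num, Real.rpow_natCast, sq_abs]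
  have heq2 : ∫ _ in T, (1:ℝ) = (volume T).toReal := by
    simp [Measure.restrict_apply_univ, measureReal_def]
  rw [heq1, heq2] at this
  calc ∫ t in T, |g t| ≤ (∫ t in T, g t ^ 2) ^ (1/(2:ℝ)) * ((volume T).toReal) ^ (1/(2:ℝ)) := this
    _ = _ := by rw [← Real.sqrt_eq_rpow, ← Real.sqrt_eq_rpow]

lemma aux_S {V : ℝ → ℝ} (hV0 : ∀ x, 0 ≤ V x)
    (hne : ¬ V =ᵐ[volume] 0) :
    ∃ n : ℕ, 0 < volume (Icc (-(n:ℝ)) n ∩ {x | 1/((n:ℝ)+1) ≤ V x}) := by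
  by_contra h
  push_neg at h
  apply hne
  have hnull : volume (⋃ n : ℕ, Icc (-(n:ℝ)) n ∩ {x | 1/((n:ℝ)+1) ≤ V x}) = 0 :=
    measure_iUnion_null fun n => le_antisymm (h n) (by simp)
  have hsub : {x | V x ≠ 0} ⊆ ⋃ n : ℕ, Icc (-(n:ℝ)) n ∩ {x | 1/((n:ℝ)+1) ≤ V x} := by
    intro x hx
    have hVx : 0 < V x := lt_of_le_of_ne (hV0 x) (Ne.symm hx)
    obtain ⟨n, hn⟩ := exists_nat_ge (max |x| (1 / V x))
    refine mem_iUnion.2 ⟨n, ⟨?_, ?_⟩⟩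
    · have hle := (le_max_left |x| (1 / V x)).trans hn
      exact ⟨neg_le_of_abs_le hle, le_of_abs_le hle⟩
    · have h1 : 1 / V x ≤ (n:ℝ) := (le_max_right _ _).trans hn
      rw [mem_setOf_eq, div_le_iff₀ (by positivity)]
      rw [div_le_iff₀ hVx] at h1
      nlinarith
  have : ∀ᵐ x, V x = 0 := by
    rw [ae_iff]
    exact measure_mono_null hsub hnull
  filter_upwards [this] with x hx
  simpa using hx

lemma aux_sq {u v A B IA IB : ℝ} (hu : |u| ≤ |v| + A * B) (hA : 0 ≤ A) (hB : 0 ≤ B)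
    (hA2 : A ^ 2 = IA) (hB2 : B ^ 2 = IB) : u ^ 2 ≤ 2 * v ^ 2 + 2 * (IA * IB) := by
  nlinarith [sq_abs u, sq_abs v, abs_nonneg u, abs_nonneg v, sq_nonneg (|v| - A * B),
    mul_self_le_mul_self (abs_nonneg u) hu]

lemma aux_final {s a D1 D2 R : ℝ} (hs : 1 ≤ s) (hD1 : 0 ≤ D1) (hD2 : 0 ≤ D2)
    (ha : 0 < a) (hR : 0 ≤ R) :
    2*(s*(D2/a)) + 2*(D1*((1+R)*s)) ≤ (2/a + 2*(1+R)) * (s*(D1+D2)) := by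
  have h3 : 0 ≤ 2/a := by positivity
  have key : (2/a + 2*(1+R)) * (s*(D1+D2)) - (2*(s*(D2/a)) + 2*(D1*((1+R)*s)))
      = (2/a)*s*D1 + 2*(1+R)*s*D2 := by
    field_simp
    ring
  have hs0 : (0:ℝ) ≤ s := by linarith
  nlinarith [mul_nonneg (mul_nonneg h3 hs0) hD1,
    mul_nonneg (mul_nonneg (by linarith : (0:ℝ) ≤ 2*(1+R)) hs0) hD2]

set_option maxHeartbeats 1000000 in
/-- Weighted coercivity inequality: for `U ≥ 0` nonzero in `L¹`, there is `C_U > 0`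
such that for every weight `W ≥ 0` with `⟨x⟩W ∈ L¹` and every `f ∈ H¹(ℝ)`,
`∫ W|f|² ≤ C_U ‖⟨x⟩W‖_{L¹} (∫ |f'|² + ∫ U|f|²)`. -/
theorem weighted_coercivity (U : ℝ → ℝ) (hU0 : ∀ x, 0 ≤ U x)
    (hUint : Integrable U) (hUne : ¬ U =ᵐ[volume] 0) :
    ∃ C : ℝ, 0 < C ∧ ∀ (W f : ℝ → ℝ),
      (∀ x, 0 ≤ W x) →
      Integrable (fun x => Real.sqrt (1 + x ^ 2) * W x) →
      Differentiable ℝ f → MemLp f 2 volume → MemLp (deriv f) 2 volume →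
      ∫ x : ℝ, W x * (f x) ^ 2 ≤
        C * (∫ x : ℝ, Real.sqrt (1 + x ^ 2) * W x) *
          ((∫ x : ℝ, (deriv f x) ^ 2) + ∫ x : ℝ, U x * (f x) ^ 2) := by
  classical
  -- a measurable, everywhere-nonnegative a.e. version of U
  set V : ℝ → ℝ := fun x => max (hUint.1.mk U x) 0 with hVdef
  have hVm : Measurable V := hUint.1.measurable_mk.max measurable_const
  have hV0 : ∀ x, 0 ≤ V x := fun x => le_max_right _ _
  have hVU : V =ᵐ[volume] U := by
    filter_upwards [hUint.1.ae_eq_mk] with x hx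
    simp only [hVdef, ← hx]
    exact max_eq_left (hU0 x)
  have hVne : ¬ V =ᵐ[volume] 0 := fun h => hUne ((hVU.symm.trans h : U =ᵐ[volume] 0))
  obtain ⟨n, hn⟩ := aux_S hV0 hVne
  set R : ℝ := (n : ℝ) with hRdef
  have hR : 0 ≤ R := Nat.cast_nonneg n
  set δ : ℝ := 1/((n:ℝ)+1) with hδdef
  have hδ : 0 < δ := by positivity
  set S : Set ℝ := Icc (-R) R ∩ {x | δ ≤ V x} with hSdef
  have hSm : MeasurableSet S :=
    measurableSet_Icc.inter (measurableSet_le measurable_const hVm)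
  have hSfin : volume S < ⊤ :=
    lt_of_le_of_lt (measure_mono inter_subset_left)
      (by rw [Real.volume_Icc]; exact ENNReal.ofReal_lt_top)
  set m : ℝ := (volume S).toReal with hmdef
  have hm : 0 < m := ENNReal.toReal_pos hn.ne' hSfin.ne
  refine ⟨2/(δ*m) + 2*(1+R), by positivity, ?_⟩
  intro W f hW0 hWint hfd hf2 hf'2
  have fc : Continuous f := hfd.continuous
  have hfsq : Integrable (fun x => f x ^ 2) := hf2.integrable_sq
  have hf'sq : Integrable (fun x => deriv f x ^ 2) := hf'2.integrable_sq
  set D1 : ℝ := ∫ x, deriv f x ^ 2 with hD1def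
  set D2 : ℝ := ∫ x, U x * f x ^ 2 with hD2def
  have hD1 : 0 ≤ D1 := integral_nonneg fun x => sq_nonneg _
  have hD2 : 0 ≤ D2 := integral_nonneg fun x => mul_nonneg (hU0 x) (sq_nonneg _)
  have key : ∀ t : ℝ, ‖2 * f t * deriv f t‖ ≤ f t ^ 2 + deriv f t ^ 2 := by
    intro t
    rw [Real.norm_eq_abs, abs_le]
    constructor <;> nlinarith [sq_nonneg (f t - deriv f t), sq_nonneg (f t + deriv f t)]
  have hfdsq : Integrable (fun t => f t ^ 2 + deriv f t ^ 2) := hfsq.add hf'sq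
  -- boundedness of f
  set M : ℝ := f 0 ^ 2 + ((∫ x, f x ^ 2) + D1) with hMdef
  have hbound : ∀ x, f x ^ 2 ≤ M := by
    intro x
    have hdint : IntervalIntegrable (fun t => 2 * f t * deriv f t) volume 0 x := by
      rw [intervalIntegrable_iff]
      refine Integrable.mono' ((hfsq.add hf'sq).integrableOn)
        (((fc.aestronglyMeasurable.const_mul 2).mul hf'2.1).restrict)
        (Eventually.of_forall fun t => key t)
    have hftc : ∫ t in (0:ℝ)..x, 2 * f t * deriv f t = f x ^ 2 - f 0 ^ 2 := by
      refine intervalIntegral.integral_eq_sub_of_hasDerivAt (f := fun y => f y ^ 2)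
        (f' := fun t => 2 * f t * deriv f t) (fun t _ => ?_) hdint
      have h := ((hfd t).hasDerivAt).pow 2
      norm_num at h
      exact h
    have habs : ∫ t in (0:ℝ)..x, 2 * f t * deriv f t
        ≤ ∫ t in Ι (0:ℝ) x, ‖2 * f t * deriv f t‖ :=
      (le_abs_self _).trans ((Real.norm_eq_abs _) ▸
        intervalIntegral.norm_integral_le_integral_norm_uIoc
          (f := fun t => 2 * f t * deriv f t) (a := (0:ℝ)) (b := x) (μ := volume))
    have h1 : ∫ t in Ι (0:ℝ) x, ‖2 * f t * deriv f t‖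
        ≤ ∫ t in Ι (0:ℝ) x, (f t ^ 2 + deriv f t ^ 2) := by
      refine integral_mono_of_nonneg (Eventually.of_forall fun t => norm_nonneg _)
        hfdsq.integrableOn (Eventually.of_forall fun t => key t)
    have h2 : ∫ t in Ι (0:ℝ) x, (f t ^ 2 + deriv f t ^ 2) ≤ ∫ t, (f t ^ 2 + deriv f t ^ 2) :=
      setIntegral_le_integral hfdsq (Eventually.of_forall fun t => by positivity)
    have hch : f x ^ 2 - f 0 ^ 2 ≤ ∫ t, (f t ^ 2 + deriv f t ^ 2) := by
      rw [← hftc]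
      exact habs.trans (h1.trans h2)
    rw [integral_add hfsq hf'sq] at hch
    rw [hMdef]; linarith
  have hUf2 : Integrable (fun x => U x * f x ^ 2) := by
    refine Integrable.mono' (hUint.mul_const M)
      (hUint.1.mul (fc.pow 2).aestronglyMeasurable) (Eventually.of_forall fun x => ?_)
    rw [Real.norm_eq_abs, abs_of_nonneg (mul_nonneg (hU0 x) (sq_nonneg _))]
    exact mul_le_mul_of_nonneg_left (hbound x) (hU0 x)
  have hVf2 : Integrable (fun x => V x * f x ^ 2) :=
    hUf2.congr (by filter_upwards [hVU] with x hx; rw [hx])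
  have hVD2 : ∫ x, V x * f x ^ 2 = D2 :=
    integral_congr_ae (by filter_upwards [hVU] with x hx; rw [hx])
  -- a good point y ∈ S
  have hy : ∃ y ∈ S, f y ^ 2 ≤ D2 / (δ * m) := by
    by_contra hcon
    push_neg at hcon
    have hgpos : ∀ x ∈ S, 0 < V x * f x ^ 2 - D2/m := by
      intro x hx
      have h1 : δ ≤ V x := hx.2
      have h2 : D2/(δ*m) < f x ^ 2 := hcon x hx
      have h3 : δ * (D2/(δ*m)) = D2/m := by field_simp
      nlinarith [sq_nonneg (f x)]
    have hpos : 0 < ∫ x in S, (V x * f x ^ 2 - D2/m) := by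
      rw [setIntegral_pos_iff_support_of_nonneg_ae
        (ae_restrict_of_forall_mem hSm fun x hx => (hgpos x hx).le)
        (hVf2.integrableOn.sub (integrableOn_const hSfin.ne))]
      refine lt_of_lt_of_le hn (measure_mono fun x hx => ?_)
      exact ⟨ne_of_gt (hgpos x hx), hx⟩
    rw [integral_sub hVf2.integrableOn
      (integrableOn_const hSfin.ne), setIntegral_const] at hpos
    have hle : ∫ x in S, V x * f x ^ 2 ≤ D2 := by
      rw [← hVD2]
      exact setIntegral_le_integral hVf2
        (Eventually.of_forall fun x => mul_nonneg (hV0 x) (sq_nonneg _))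
    have hsm : (volume S).toReal • (D2/m) = D2 := by
      rw [smul_eq_mul, ← hmdef]
      field_simp
    rw [measureReal_def, hsm] at hpos
    linarith
  obtain ⟨y, hyS, hfy⟩ := hy
  have hyR : |y| ≤ R := abs_le.2 ⟨hyS.1.1, hyS.1.2⟩
  -- pointwise bound
  have hptw : ∀ x, f x ^ 2 ≤ (2/(δ*m) + 2*(1+R)) * (Real.sqrt (1 + x ^ 2) * (D1 + D2)) := by
    intro x
    have hΙfin : volume (Ι y x) < ⊤ := measure_Ioc_lt_top
    have hdint : IntervalIntegrable (deriv f) volume y x := by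
      rw [intervalIntegrable_iff]
      refine Integrable.mono' (g := fun t => deriv f t ^ 2 + 1) ?_
        hf'2.1.restrict (Eventually.of_forall fun t => ?_)
      · exact hf'sq.integrableOn.add (integrableOn_const hΙfin.ne)
      show ‖deriv f t‖ ≤ deriv f t ^ 2 + 1
      rw [Real.norm_eq_abs]
      nlinarith [sq_nonneg (|deriv f t| - 1), sq_abs (deriv f t), abs_nonneg (deriv f t)]
    have hftc : ∫ t in y..x, deriv f t = f x - f y :=
      intervalIntegral.integral_deriv_eq_sub (fun t _ => hfd t) hdint
    have habs : |f x - f y| ≤ ∫ t in Ι y x, |deriv f t| := by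
      rw [← hftc]
      simpa [Real.norm_eq_abs] using
        intervalIntegral.norm_integral_le_integral_norm_uIoc
          (f := deriv f) (a := y) (b := x) (μ := volume)
    have hcs := aux_cs hΙfin.ne hf'2
    have hsub : ∫ t in Ι y x, deriv f t ^ 2 ≤ D1 :=
      setIntegral_le_integral hf'sq (Eventually.of_forall fun t => sq_nonneg _)
    have hIntnn : 0 ≤ ∫ t in Ι y x, deriv f t ^ 2 := integral_nonneg fun t => sq_nonneg _
    have hvol : (volume (Ι y x)).toReal = |x - y| := by
      rw [Set.uIoc, Real.volume_Ioc, ENNReal.toReal_ofReal (sub_nonneg.2 inf_le_sup)]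
      rw [show y ⊔ x = max y x from rfl, show y ⊓ x = min y x from rfl,
        max_sub_min_eq_abs, abs_sub_comm]
    have h0 : |f x| ≤ |f y| +
        Real.sqrt (∫ t in Ι y x, deriv f t ^ 2) * Real.sqrt ((volume (Ι y x)).toReal) := by
      have h := abs_sub_abs_le_abs_sub (f x) (f y)
      linarith [habs.trans hcs]
    have hA2 := Real.sq_sqrt hIntnn
    have hB2 := Real.sq_sqrt (ENNReal.toReal_nonneg (a := volume (Ι y x)))
    have hAnn := Real.sqrt_nonneg (∫ t in Ι y x, deriv f t ^ 2)
    have hBnn := Real.sqrt_nonneg ((volume (Ι y x)).toReal)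
    have hsq : f x ^ 2 ≤ 2 * f y ^ 2 +
        2 * ((∫ t in Ι y x, deriv f t ^ 2) * ((volume (Ι y x)).toReal)) :=
      aux_sq h0 hAnn hBnn hA2 hB2
    have h2 := aux_one_le x
    have h1 := aux_abs_le x
    have hxy : |x - y| ≤ (1 + R) * Real.sqrt (1 + x ^ 2) := by
      have h3 : |x - y| ≤ |x| + |y| := (sub_eq_add_neg x y ▸ (abs_add_le x (-y))).trans
        (by rw [abs_neg])
      nlinarith
    have hIle : (∫ t in Ι y x, deriv f t ^ 2) * ((volume (Ι y x)).toReal)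
        ≤ D1 * ((1 + R) * Real.sqrt (1 + x ^ 2)) := by
      rw [hvol]
      exact mul_le_mul hsub hxy (abs_nonneg _) hD1
    have hδm : 0 < δ * m := mul_pos hδ hm
    have hfy' : f y ^ 2 ≤ Real.sqrt (1 + x ^ 2) * (D2 / (δ * m)) := by
      have hdm : 0 ≤ D2 / (δ * m) := by positivity
      nlinarith
    calc f x ^ 2 ≤ 2 * (Real.sqrt (1 + x ^ 2) * (D2 / (δ * m)))
          + 2 * (D1 * ((1 + R) * Real.sqrt (1 + x ^ 2))) := by linarith
      _ ≤ (2/(δ*m) + 2*(1+R)) * (Real.sqrt (1 + x ^ 2) * (D1 + D2)) :=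
          aux_final h2 hD1 hD2 hδm hR
  -- integrate the pointwise bound
  set C0 : ℝ := 2/(δ*m) + 2*(1+R) with hC0def
  have hWm : AEStronglyMeasurable W volume := by
    have hcont : Continuous fun x : ℝ => (Real.sqrt (1 + x ^ 2))⁻¹ := by
      refine Continuous.inv₀ ?_ fun x => by nlinarith [aux_one_le x]
      exact (continuous_const.add (continuous_pow 2)).sqrt
    have hWeq : W = fun x => (Real.sqrt (1 + x ^ 2) * W x) * (Real.sqrt (1 + x ^ 2))⁻¹ := by
      funext x
      have h1 : Real.sqrt (1 + x ^ 2) ≠ 0 := by nlinarith [aux_one_le x]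
      field_simp
    rw [hWeq]
    exact hWint.1.mul hcont.aestronglyMeasurable
  have hptw' : ∀ x, W x * f x ^ 2 ≤ C0 * (D1 + D2) * (Real.sqrt (1 + x ^ 2) * W x) := by
    intro x
    calc W x * f x ^ 2 ≤ W x * (C0 * (Real.sqrt (1 + x ^ 2) * (D1 + D2))) :=
          mul_le_mul_of_nonneg_left (hptw x) (hW0 x)
      _ = C0 * (D1 + D2) * (Real.sqrt (1 + x ^ 2) * W x) := by ring
  have hWfint : Integrable (fun x => W x * f x ^ 2) := by
    refine Integrable.mono' (hWint.const_mul (C0 * (D1 + D2)))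
      (hWm.mul (fc.pow 2).aestronglyMeasurable) (Eventually.of_forall fun x => ?_)
    rw [Real.norm_eq_abs, abs_of_nonneg (mul_nonneg (hW0 x) (sq_nonneg _))]
    exact hptw' x
  have hmono : ∫ x, W x * f x ^ 2 ≤ ∫ x, C0 * (D1 + D2) * (Real.sqrt (1 + x ^ 2) * W x) :=
    integral_mono hWfint (hWint.const_mul _) hptw'
  rw [integral_const_mul] at hmono
  calc ∫ x, W x * f x ^ 2 ≤ C0 * (D1 + D2) * ∫ x, Real.sqrt (1 + x ^ 2) * W x := hmono
    _ = C0 * (∫ x, Real.sqrt (1 + x ^ 2) * W x) * (D1 + D2) := by ring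
end
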